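/- Let K/F be a cyclic Galois extension of number fields of degree m, Gal(K/F) = ⟨σ⟩, d ∈ O_K \ O_F with f = t^m − d irreducible in K[t;σ], and Λ the natural order in (K/F,σ,d). Let I = q₁^{s₁}···q_t^{s_t} be the factorization of a nonzero ideal I of O_F into prime ideals. Then Λ/IΛ is isomorphic as an O_F/I-algebra to the direct product over j = 1,...,t of the Petit algebras ((O_K/q_j^{s_j}O_K)/(O_F/q_j^{s_j}), σ̄, d + q_j^{s_j}O_K). -/

import Mathlib

/-- An abstract presentation of the skew polynomial ring `S[t;σ,δ]`:
a ring `R` together with an embedding of `S`, a variable `t` satisfying the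
commutation rule `t·a = σ(a)·t + δ(a)`, such that the `t^i` form a basis of `R`
as a left `S`-module (encoded by the coefficient equivalence). -/
structure SkewPolyRing (S : Type*) (R : Type*) [Ring S] [Ring R]
    (σ : S →+* S) (δ : S →+ S) : Type _ where
  ι : S →+* R
  t : R
  t_comm : ∀ a : S, t * ι a = ι (σ a) * t + ι (δ a)
  coeff : R ≃+ (ℕ →₀ S)
  coeff_symm : ∀ p : ℕ →₀ S, coeff.symm p = p.sum fun i a => ι a * t ^ i

namespace SkewPolyRing

variable {S R : Type*} [Ring S] [Ring R] {σ : S →+* S} {δ : S →+ S}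

/-- `g` has degree `< m`. -/
def degLT (P : SkewPolyRing S R σ δ) (g : R) (m : ℕ) : Prop :=
  ∀ i, m ≤ i → P.coeff g i = 0

/-- The degree of a skew polynomial (with `deg 0 = 0` by convention). -/
noncomputable def deg (P : SkewPolyRing S R σ δ) (g : R) : ℕ :=
  (P.coeff g).support.sup id

/-- `f` is monic of degree `m`. -/
def MonicDeg (P : SkewPolyRing S R σ δ) (f : R) (m : ℕ) : Prop :=
  P.coeff f m = 1 ∧ ∀ i, m < i → P.coeff f i = 0

/-- `modr` computes a remainder of right division by `f`. -/
def IsModr (P : SkewPolyRing S R σ δ) (f : R) (m : ℕ) (modr : R → R) : Prop :=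
  ∀ g : R, P.degLT (modr g) m ∧ ∃ q : R, g = q * f + modr g

end SkewPolyRing

open NumberField Finsupp

section AuxSkew

variable {S R : Type*} [Ring S] [Ring R] {σ : S →+* S}

namespace SkewPolyRing

variable (P : SkewPolyRing S R σ 0)

theorem t_mul' (a : S) : P.t * P.ι a = P.ι (σ a) * P.t := by
  rw [P.t_comm]; simp

theorem symm_single (i : ℕ) (a : S) :
    P.coeff.symm (Finsupp.single i a) = P.ι a * P.t ^ i := by
  rw [P.coeff_symm, Finsupp.sum_single_index]; simp

theorem coeff_single (i : ℕ) (a : S) :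
    P.coeff (P.ι a * P.t ^ i) = Finsupp.single i a := by
  rw [← P.symm_single]; exact P.coeff.apply_symm_apply _

theorem coeff_one' : P.coeff (1 : R) = Finsupp.single 0 1 := by
  have h := P.coeff_single 0 1
  simpa using h

theorem t_pow_mul (n : ℕ) (a : S) :
    P.t ^ n * P.ι a = P.ι ((⇑σ)^[n] a) * P.t ^ n := by
  induction n with
  | zero => simp
  | succ n ih =>
    rw [pow_succ', mul_assoc, ih, ← mul_assoc, t_mul', mul_assoc, ← pow_succ',
      Function.iterate_succ_apply']

theorem single_mul_single (i j : ℕ) (a b : S) :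
    (P.ι a * P.t ^ i) * (P.ι b * P.t ^ j) = P.ι (a * (⇑σ)^[i] b) * P.t ^ (i + j) := by
  calc (P.ι a * P.t ^ i) * (P.ι b * P.t ^ j)
      = P.ι a * ((P.t ^ i * P.ι b) * P.t ^ j) := by simp only [mul_assoc]
    _ = P.ι a * (P.ι ((⇑σ)^[i] b) * P.t ^ i * P.t ^ j) := by rw [t_pow_mul]
    _ = P.ι (a * (⇑σ)^[i] b) * P.t ^ (i + j) := by
        rw [map_mul]; simp only [mul_assoc, pow_add]

theorem mul_coeff (g h : R) (n : ℕ) :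
    P.coeff (g * h) n
      = ∑ i ∈ Finset.range (n + 1), P.coeff g i * (⇑σ)^[i] (P.coeff h (n - i)) := by
  have singles : ∀ (i jj : ℕ) (a b : S) (n : ℕ),
      P.coeff ((P.ι a * P.t ^ i) * (P.ι b * P.t ^ jj)) n
        = ∑ i' ∈ Finset.range (n + 1),
            Finsupp.single i a i' * (⇑σ)^[i'] (Finsupp.single jj b (n - i')) := by
    intro i jj a b n
    rw [P.single_mul_single, P.coeff_single]
    rcases le_or_gt i n with hin | hin
    · rw [Finset.sum_eq_single i]
      · rw [Finsupp.single_eq_same]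
        rcases eq_or_ne (n - i) jj with hc | hc
        · rw [hc, Finsupp.single_eq_same, Finsupp.single_apply,
            if_pos (show i + jj = n by omega)]
        · rw [Finsupp.single_eq_of_ne' (Ne.symm hc), iterate_map_zero, mul_zero,
            Finsupp.single_apply, if_neg (show ¬ i + jj = n by omega)]
      · intro b' _ hne
        rw [Finsupp.single_eq_of_ne' (Ne.symm hne), zero_mul]
      · intro habs
        exact absurd (Finset.mem_range.mpr (by omega)) habs
    · rw [Finset.sum_eq_zero, Finsupp.single_apply, if_neg (show ¬ i + jj = n by omega)]
      intro i' hi'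
      have hi'' := Finset.mem_range.mp hi'
      rw [Finsupp.single_eq_of_ne' (show i ≠ i' by omega), zero_mul]
  have single_left : ∀ (i : ℕ) (a : S) (q : ℕ →₀ S) (n : ℕ),
      P.coeff ((P.ι a * P.t ^ i) * P.coeff.symm q) n
        = ∑ i' ∈ Finset.range (n + 1),
            Finsupp.single i a i' * (⇑σ)^[i'] (q (n - i')) := by
    intro i a q
    induction q using Finsupp.induction with
    | zero => intro n; simp
    | single_add jj b q hjj hb ih =>
      intro n
      rw [map_add, mul_add, map_add, Finsupp.add_apply, ih, P.symm_single, singles]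
      simp only [Finsupp.add_apply, iterate_map_add, mul_add, Finset.sum_add_distrib]
  have main : ∀ (p q : ℕ →₀ S) (n : ℕ),
      P.coeff (P.coeff.symm p * P.coeff.symm q) n
        = ∑ i ∈ Finset.range (n + 1), p i * (⇑σ)^[i] (q (n - i)) := by
    intro p
    induction p using Finsupp.induction with
    | zero => intro q n; simp
    | single_add i a p hi ha ih =>
      intro q n
      rw [map_add, add_mul, map_add, Finsupp.add_apply, ih, P.symm_single, single_left]
      simp only [Finsupp.add_apply, add_mul, Finset.sum_add_distrib]
  have h1 := main (P.coeff g) (P.coeff h) n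
  simpa using h1

theorem mul_eq_zero_of_degLT (f' : R) (m : ℕ) (hf : P.MonicDeg f' m) (u : R)
    (h : P.degLT (u * f') m) : u * f' = 0 := by
  have hu : u = 0 := by
    by_contra hu0
    have hs : (P.coeff u).support.Nonempty := by
      rw [Finsupp.support_nonempty_iff]
      intro h0
      apply hu0
      have h1 := congrArg P.coeff.symm h0
      simpa using h1
    set n := (P.coeff u).support.max' hs with hn
    have hne : P.coeff u n ≠ 0 := Finsupp.mem_support_iff.mp ((P.coeff u).support.max'_mem hs)
    have hmax : ∀ i, n < i → P.coeff u i = 0 := by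
      intro i hi
      by_contra hcon
      exact absurd (Finset.le_max' _ i (Finsupp.mem_support_iff.mpr hcon)) (by omega)
    have h0 := h (n + m) (Nat.le_add_left m n)
    have hsum : ∑ i ∈ Finset.range (n + m + 1),
        P.coeff u i * (⇑σ)^[i] (P.coeff f' (n + m - i)) = P.coeff u n := by
      rw [Finset.sum_eq_single n]
      · rw [show n + m - n = m by omega, hf.1, iterate_map_one, mul_one]
      · intro b _ hbn
        rcases lt_or_gt_of_ne hbn with hlt | hgt
        · rw [hf.2 (n + m - b) (by omega), iterate_map_zero, mul_zero]
        · rw [hmax b hgt, zero_mul]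
      · intro habs
        exact absurd (Finset.mem_range.mpr (by omega)) habs
    rw [P.mul_coeff, hsum] at h0
    exact hne h0
  rw [hu, zero_mul]

end SkewPolyRing

theorem aux_prod_eq_inf {A : Type*} [CommRing A] {ι : Type*} [DecidableEq ι] (s : Finset ι)
    (Jf : ι → Ideal A)
    (h : ∀ i ∈ s, ∀ j ∈ s, i ≠ j → IsCoprime (Jf i) (Jf j)) :
    ∏ j ∈ s, Jf j = s.inf Jf := by
  induction s using Finset.induction_on with
  | empty => simp
  | @insert a s ha ih =>
    rw [Finset.prod_insert ha, Finset.inf_insert,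
      ← ih (fun i hi j hj hij =>
        h i (Finset.mem_insert_of_mem hi) j (Finset.mem_insert_of_mem hj) hij)]
    have hcop : IsCoprime (Jf a) (∏ j ∈ s, Jf j) :=
      IsCoprime.prod_right fun j hj =>
        h a (Finset.mem_insert_self a s) j (Finset.mem_insert_of_mem hj)
          (by rintro rfl; exact ha hj)
    exact (Ideal.inf_eq_mul_of_isCoprime hcop).symm

end AuxSkew

section Push

variable {S S' Rg Rg' : Type*} [Ring S] [Ring S'] [Ring Rg] [Ring Rg']
  {σ : S →+* S} {σ' : S' →+* S'}
  (P : SkewPolyRing S Rg σ 0) (P' : SkewPolyRing S' Rg' σ' 0)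
  (ψ : S →+* S')

/-- The coefficientwise pushforward along `ψ` between two skew polynomial rings. -/
noncomputable def SkewPolyRing.push (g : Rg) : Rg' :=
  P'.coeff.symm (Finsupp.mapRange ψ (map_zero ψ) (P.coeff g))

namespace SkewPolyRing

theorem coeff_push (g : Rg) (i : ℕ) :
    P'.coeff (push P P' ψ g) i = ψ (P.coeff g i) := by
  rw [push, P'.coeff.apply_symm_apply, Finsupp.mapRange_apply]

theorem push_ext {x y : Rg'} (h : ∀ i, P'.coeff x i = P'.coeff y i) : x = y :=
  P'.coeff.injective (Finsupp.ext h)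

theorem push_add (g h : Rg) :
    push P P' ψ (g + h) = push P P' ψ g + push P P' ψ h := by
  apply push_ext P'
  intro i
  simp only [coeff_push, map_add, Finsupp.add_apply]

theorem push_sub (g h : Rg) :
    push P P' ψ (g - h) = push P P' ψ g - push P P' ψ h := by
  apply push_ext P'
  intro i
  simp only [coeff_push, map_sub, Finsupp.sub_apply]

theorem push_one : push P P' ψ (1 : Rg) = 1 := by
  apply push_ext P'
  intro i
  rw [coeff_push, P.coeff_one', P'.coeff_one']
  simp only [Finsupp.single_apply]
  split_ifs <;> simp

theorem push_iterate (hψ : ∀ x, ψ (σ x) = σ' (ψ x)) (i : ℕ) (x : S) : ψ ((⇑σ)^[i] x) = (⇑σ')^[i] (ψ x) := by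
  induction i with
  | zero => rfl
  | succ i ih =>
    rw [Function.iterate_succ_apply', Function.iterate_succ_apply', ← ih, ← hψ]

theorem push_mul (hψ : ∀ x, ψ (σ x) = σ' (ψ x)) (g h : Rg) :
    push P P' ψ (g * h) = push P P' ψ g * push P P' ψ h := by
  apply push_ext P'
  intro n
  rw [coeff_push, P.mul_coeff, P'.mul_coeff, map_sum]
  refine Finset.sum_congr rfl fun i _ => ?_
  rw [map_mul, coeff_push, coeff_push, push_iterate ψ hψ]

theorem push_degLT (g : Rg) (m : ℕ) (hg : P.degLT g m) :
    P'.degLT (push P P' ψ g) m := by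
  intro i hi
  rw [coeff_push, hg i hi, map_zero]

theorem push_monic (f : Rg) (m : ℕ) (hf : P.MonicDeg f m) :
    P'.MonicDeg (push P P' ψ f) m := by
  constructor
  · rw [coeff_push, hf.1, map_one]
  · intro i hi
    rw [coeff_push, hf.2 i hi, map_zero]

theorem push_modr (hψ : ∀ x, ψ (σ x) = σ' (ψ x)) (f : Rg) (m : ℕ) (hf : P.MonicDeg f m)
    (modr : Rg → Rg) (hmodr : P.IsModr f m modr)
    (modr' : Rg' → Rg') (hmodr' : P'.IsModr (push P P' ψ f) m modr')
    (g h : Rg) :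
    push P P' ψ (modr (g * h)) = modr' (push P P' ψ g * push P P' ψ h) := by
  obtain ⟨hA, q1, hq1⟩ := hmodr (g * h)
  obtain ⟨hB, q2, hq2⟩ := hmodr' (push P P' ψ g * push P P' ψ h)
  set A := push P P' ψ (modr (g * h)) with hAdef
  set B := modr' (push P P' ψ g * push P P' ψ h) with hBdef
  set Fp := push P P' ψ f with hFdef
  have h3 : push P P' ψ q1 * Fp + A = q2 * Fp + B := by
    calc push P P' ψ q1 * Fp + A = push P P' ψ (q1 * f + modr (g * h)) := by
          rw [push_add, push_mul P P' ψ hψ]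
      _ = push P P' ψ (g * h) := by rw [← hq1]
      _ = push P P' ψ g * push P P' ψ h := push_mul P P' ψ hψ g h
      _ = q2 * Fp + B := hq2
  have hdiff : A - B = (q2 - push P P' ψ q1) * Fp := by
    rw [sub_mul, sub_eq_sub_iff_add_eq_add, add_comm]
    exact h3
  have hlt : P'.degLT (A - B) m := by
    intro i hi
    have h1 := push_degLT P P' ψ _ m hA i hi
    have h2 := hB i hi
    rw [map_sub, Finsupp.sub_apply, h1, h2, sub_zero]
  have hz := P'.mul_eq_zero_of_degLT Fp m (push_monic P P' ψ f m hf) (q2 - push P P' ψ q1)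
    (by rw [← hdiff]; exact hlt)
  rw [← hdiff] at hz
  exact sub_eq_zero.mp hz

end SkewPolyRing

end Push

set_option synthInstance.maxHeartbeats 1000000 in
set_option maxHeartbeats 1000000 in
/-- Let `K/F` be a cyclic Galois extension of number fields of degree `m` with
`Gal(K/F) = ⟨σ⟩`, `d ∈ O_K \ O_F` with `f = t^m − d` irreducible in `K[t;σ]`, and `Λ` the
natural order in `(K/F,σ,d)`.  Let `I = q₁^{s₁}⋯q_k^{s_k}` be the factorization of a
nonzero ideal `I` of `O_F` into powers of distinct prime ideals.  Then `Λ/IΛ` is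
isomorphic as an `O_F/I`-algebra to the direct product over `j` of the Petit algebras
`((O_K/q_j^{s_j}O_K)/(O_F/q_j^{s_j}), σ̄, d + q_j^{s_j}O_K)`: the combined coefficientwise
reduction map `g ↦ (ḡ⁽¹⁾, …, ḡ⁽ᵏ⁾)` is additive, unital, multiplicative for the Petit
products in each factor, maps `Λ` onto the product of the reduced Petit algebras, and its
kernel is `IΛ = {Σ_{i<m} aᵢtⁱ : aᵢ ∈ I·O_K}`. -/
theorem natural_order_quotient_CRT {F K R RK : Type*} [Field F] [Field K]
    [NumberField F] [NumberField K] [Algebra F K] [IsGalois F K] [Ring R] [Ring RK]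
    {k : ℕ} {R' : Fin k → Type*} [∀ j, Ring (R' j)]
    (m : ℕ) (hm : 2 ≤ m) (hdeg : Module.finrank F K = m)
    (σ : K ≃ₐ[F] K) (hgen : ∀ τ : K ≃ₐ[F] K, τ ∈ Subgroup.zpowers σ)
    (σ₀ : 𝓞 K →+* 𝓞 K) (hσ₀ : ∀ x : 𝓞 K, (σ₀ x : K) = σ (x : K))
    (d : 𝓞 K) (hd : d ∉ Set.range (algebraMap (𝓞 F) (𝓞 K)))
    -- `f = t^m − d` is irreducible in `K[t;σ]`:
    (σK : K →+* K) (hσK : ∀ x : K, σK x = σ x)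
    (PK : SkewPolyRing K RK σK 0)
    (hirr : ¬ ∃ g h : RK, PK.degLT g m ∧ PK.degLT h m ∧
      PK.coeff.symm (Finsupp.single m 1 - Finsupp.single 0 (d : K)) = g * h)
    -- the natural order `Λ`: the Petit algebra of `f = t^m − d` inside `R = O_K[t;σ]`:
    (P : SkewPolyRing (𝓞 K) R σ₀ 0) (f : R)
    (hf : f = P.coeff.symm (Finsupp.single m 1 - Finsupp.single 0 d))
    (modr : R → R) (hmodr : P.IsModr f m modr)
    -- the factorization `I = q₁^{s₁} ⋯ q_k^{s_k}` into powers of distinct primes: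
    (q : Fin k → Ideal (𝓞 F)) (s : Fin k → ℕ) (hq : ∀ j, (q j).IsPrime)
    (hq0 : ∀ j, q j ≠ ⊥) (hs : ∀ j, 0 < s j) (hqd : ∀ i j, i ≠ j → q i ≠ q j)
    (I : Ideal (𝓞 F)) (hI : I = ∏ j, q j ^ s j) (hIne : I ≠ ⊥)
    -- for each `j`, the reduced skew polynomial ring over `O_K/q_j^{s_j}O_K`:
    (J : Fin k → Ideal (𝓞 K))
    (hJ : ∀ j, J j = Ideal.map (algebraMap (𝓞 F) (𝓞 K)) (q j ^ s j))
    (σb : ∀ j, (𝓞 K ⧸ J j) →+* (𝓞 K ⧸ J j))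
    (hσb : ∀ j, ∀ x : 𝓞 K,
      σb j (Ideal.Quotient.mk (J j) x) = Ideal.Quotient.mk (J j) (σ₀ x))
    (P' : ∀ j, SkewPolyRing (𝓞 K ⧸ J j) (R' j) (σb j) 0)
    (red : ∀ j, R → R' j)
    (hred : ∀ j, ∀ g : R, red j g = (P' j).coeff.symm
      (Finsupp.mapRange (Ideal.Quotient.mk (J j)) (map_zero _) (P.coeff g)))
    (modr' : ∀ j, R' j → R' j) (hmodr' : ∀ j, (P' j).IsModr (red j f) m (modr' j)) :
    -- the combined reduction map is additive and unital:
    (∀ j, ∀ g h : R, red j (g + h) = red j g + red j h) ∧ (∀ j, red j (1 : R) = 1) ∧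
    -- it is multiplicative for the Petit products in each factor:
    (∀ j, ∀ g h : R, P.degLT g m → P.degLT h m →
        red j (modr (g * h)) = modr' j (red j g * red j h)) ∧
    -- it maps `Λ` onto the direct product of the reduced Petit algebras:
    (∀ j, ∀ g : R, P.degLT g m → (P' j).degLT (red j g) m) ∧
    (∀ v : ∀ j, R' j, (∀ j, (P' j).degLT (v j) m) →
        ∃ g : R, P.degLT g m ∧ ∀ j, red j g = v j) ∧
    -- its kernel on `Λ` is `IΛ = {Σ_{i<m} aᵢtⁱ : aᵢ ∈ I·O_K}`:
    (∀ g : R, P.degLT g m → ((∀ j, red j g = 0) ↔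
        ∀ i, P.coeff g i ∈ Ideal.map (algebraMap (𝓞 F) (𝓞 K)) I)) := by
  classical
  have hred' : ∀ (j : Fin k) (g : R),
      red j g = SkewPolyRing.push P (P' j) (Ideal.Quotient.mk (J j)) g := fun j g => hred j g
  have hψ : ∀ (j : Fin k) (x : 𝓞 K),
      (Ideal.Quotient.mk (J j)) (σ₀ x) = σb j (Ideal.Quotient.mk (J j) x) :=
    fun j x => (hσb j x).symm
  have coeff_f : P.coeff f = Finsupp.single m 1 - Finsupp.single 0 d := by
    rw [hf]; exact P.coeff.apply_symm_apply _
  have hmonic : P.MonicDeg f m := by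
    constructor
    · rw [coeff_f, Finsupp.sub_apply, Finsupp.single_eq_same,
        Finsupp.single_eq_of_ne' (show (0:ℕ) ≠ m by omega), sub_zero]
    · intro i him
      rw [coeff_f, Finsupp.sub_apply,
        Finsupp.single_eq_of_ne' (show m ≠ i by omega),
        Finsupp.single_eq_of_ne' (show (0:ℕ) ≠ i by omega), sub_zero]
  have conj1 : ∀ j : Fin k, ∀ g h : R, red j (g + h) = red j g + red j h := by
    intro j g h
    rw [hred', hred', hred']
    exact SkewPolyRing.push_add P (P' j) _ g h
  have conj2 : ∀ j : Fin k, red j (1 : R) = 1 := by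
    intro j
    rw [hred']
    exact SkewPolyRing.push_one P (P' j) _
  have conj3 : ∀ j : Fin k, ∀ g h : R, P.degLT g m → P.degLT h m →
      red j (modr (g * h)) = modr' j (red j g * red j h) := by
    intro j g h _ _
    have hm' := hmodr' j
    rw [hred'] at hm'
    rw [hred', hred', hred']
    exact SkewPolyRing.push_modr P (P' j) _ (hψ j) f m hmonic modr hmodr (modr' j) hm' g h
  have conj4 : ∀ j : Fin k, ∀ g : R, P.degLT g m → (P' j).degLT (red j g) m := by
    intro j g hg
    rw [hred']
    exact SkewPolyRing.push_degLT P (P' j) _ g m hg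
  have hmaxI : ∀ j, (q j).IsMaximal := fun j => Ideal.IsPrime.isMaximal (hq j) (hq0 j)
  have hcopJ : Pairwise (Function.onFun IsCoprime J) := by
    intro i j hij
    have hq' : IsCoprime (q i ^ s i) (q j ^ s j) :=
      (Ideal.isCoprime_iff_sup_eq.mpr ((hmaxI i).coprime_of_ne (hmaxI j) (hqd i j hij))).pow
    show IsCoprime (J i) (J j)
    rw [Ideal.isCoprime_iff_sup_eq] at hq' ⊢
    rw [hJ, hJ, ← Ideal.map_sup, hq', Ideal.map_top]
  have crt : ∀ c : (jj : Fin k) → 𝓞 K ⧸ J jj,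
      ∃ a : 𝓞 K, ∀ j, Ideal.Quotient.mk (J j) a = c j := by
    intro c
    obtain ⟨x, hx⟩ := Ideal.quotientInfToPiQuotient_surj hcopJ c
    obtain ⟨a, rfl⟩ := Ideal.Quotient.mk_surjective x
    refine ⟨a, fun j => ?_⟩
    rw [← Ideal.quotientInfToPiQuotient_mk' J a j, hx]
  have conj5 : ∀ v : (jj : Fin k) → R' jj, (∀ j, (P' j).degLT (v j) m) →
      ∃ g : R, P.degLT g m ∧ ∀ j, red j g = v j := by
    intro v hv
    have hex : ∀ i : ℕ, ∃ a : 𝓞 K, ∀ j, Ideal.Quotient.mk (J j) a = (P' j).coeff (v j) i :=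
      fun i => crt fun j => (P' j).coeff (v j) i
    choose a ha using hex
    set w : ℕ →₀ 𝓞 K := Finsupp.onFinset (Finset.range m)
      (fun i => if i < m then a i else 0)
      (by
        intro i hi
        by_contra hc
        rw [Finset.mem_range] at hc
        exact hi (if_neg hc)) with hw
    have hwi : ∀ i, w i = if i < m then a i else 0 := fun i => by rw [hw]; rfl
    refine ⟨P.coeff.symm w, ?_, ?_⟩
    · intro i hi
      rw [P.coeff.apply_symm_apply, hwi i]
      exact if_neg (by omega)
    · intro j
      rw [hred']
      apply SkewPolyRing.push_ext (P' j)
      intro i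
      rw [SkewPolyRing.coeff_push, P.coeff.apply_symm_apply, hwi i]
      rcases lt_or_ge i m with him | him
      · rw [if_pos him]
        exact ha i j
      · rw [if_neg (by omega), map_zero, hv j i him]
  have hprodinf : ∀ x : 𝓞 K,
      x ∈ Ideal.map (algebraMap (𝓞 F) (𝓞 K)) I ↔ ∀ j, x ∈ J j := by
    have hmap : Ideal.map (algebraMap (𝓞 F) (𝓞 K)) I = ∏ j, J j := by
      rw [hI]
      calc Ideal.map (algebraMap (𝓞 F) (𝓞 K)) (∏ j, q j ^ s j)
          = Ideal.mapHom (algebraMap (𝓞 F) (𝓞 K)) (∏ j, q j ^ s j) := rfl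
        _ = ∏ j, Ideal.mapHom (algebraMap (𝓞 F) (𝓞 K)) (q j ^ s j) := map_prod _ _ _
        _ = ∏ j, J j := by
            refine Finset.prod_congr rfl fun j _ => ?_
            rw [hJ]; rfl
    intro x
    rw [hmap, aux_prod_eq_inf Finset.univ J (fun i _ j _ hij => hcopJ hij),
      Submodule.mem_finsetInf]
    simp only [Finset.mem_univ, forall_true_left]
  have conj6 : ∀ g : R, P.degLT g m → ((∀ j, red j g = 0) ↔
      ∀ i, P.coeff g i ∈ Ideal.map (algebraMap (𝓞 F) (𝓞 K)) I) := by
    intro g _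
    constructor
    · intro h0 i
      refine (hprodinf _).mpr fun j => ?_
      refine Ideal.Quotient.eq_zero_iff_mem.mp ?_
      rw [← SkewPolyRing.coeff_push P (P' j) (Ideal.Quotient.mk (J j)) g i, ← hred' j g,
        h0 j, map_zero, Finsupp.coe_zero, Pi.zero_apply]
    · intro hmem j
      rw [hred']
      apply SkewPolyRing.push_ext (P' j)
      intro i
      rw [SkewPolyRing.coeff_push, Ideal.Quotient.eq_zero_iff_mem.mpr
        ((hprodinf _).mp (hmem i) j), map_zero, Finsupp.coe_zero, Pi.zero_apply]
  exact ⟨conj1, conj2, conj3, conj4, conj5, conj6⟩
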